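/- Let E be a two-dimensional vector space over a field K of characteristic ≠ 2 with a symmetric bilinear form Q. Then Q is degenerate if and only if for all vectors a, b, c, d ∈ E, no two of which are proportional, Q(a,c)Q(b,d) = Q(a,d)Q(b,c). -/

import Mathlib

theorem stmt5 {K E : Type*} [Field K] [AddCommGroup E] [Module K E]
    [FiniteDimensional K E] (hdim : Module.finrank K E = 2)
    (hchar : ringChar K ≠ 2)
    (Q : E →ₗ[K] E →ₗ[K] K) (hQ : ∀ x y, Q x y = Q y x) :
    (∃ v : E, v ≠ 0 ∧ ∀ w : E, Q v w = 0) ↔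
      ∀ a b c d : E,
        (¬ ∃ t : K, b = t • a ∨ a = t • b) →
        (¬ ∃ t : K, c = t • a ∨ a = t • c) →
        (¬ ∃ t : K, d = t • a ∨ a = t • d) →
        (¬ ∃ t : K, c = t • b ∨ b = t • c) →
        (¬ ∃ t : K, d = t • b ∨ b = t • d) →
        (¬ ∃ t : K, d = t • c ∨ c = t • d) →
        Q a c * Q b d = Q a d * Q b c := by
  have h2K : (2 : K) ≠ 0 := Ring.two_ne_zero hchar
  constructor
  · rintro ⟨v, hv0, hv⟩ a b c d _ _ _ _ _ _
    have hker : v ∈ LinearMap.ker Q := by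
      simp only [LinearMap.mem_ker]
      exact LinearMap.ext hv
    have hkerne : LinearMap.ker Q ≠ ⊥ := fun h => hv0 (by simpa [h] using hker)
    have hkpos : Module.finrank K (LinearMap.ker Q) ≠ 0 :=
      fun hz => hkerne (Submodule.finrank_eq_zero.mp hz)
    have hrn := LinearMap.finrank_range_add_finrank_ker Q
    rw [hdim] at hrn
    have hle : Module.finrank K (LinearMap.range Q) ≤ 1 := by omega
    obtain ⟨g, hg⟩ := (@finrank_le_one_iff K (LinearMap.range Q) _ _ _ _
      (Module.Free.of_divisionRing K _) _).mp hle
    obtain ⟨s, hs⟩ := hg ⟨Q a, LinearMap.mem_range_self Q a⟩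
    obtain ⟨t, ht⟩ := hg ⟨Q b, LinearMap.mem_range_self Q b⟩
    have hsa : s • (g : E →ₗ[K] K) = Q a := congrArg Subtype.val hs
    have htb : t • (g : E →ₗ[K] K) = Q b := congrArg Subtype.val ht
    have ea : ∀ w, Q a w = s * (g : E →ₗ[K] K) w := fun w => by rw [← hsa]; rfl
    have eb : ∀ w, Q b w = t * (g : E →ₗ[K] K) w := fun w => by rw [← htb]; rfl
    rw [ea, ea, eb, eb]; ring
  · intro h
    obtain b := Module.finBasisOfFinrankEq K E hdim
    have hkey : ∀ s t : K, s • b 0 + t • b 1 = 0 → s = 0 ∧ t = 0 := by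
      intro s t hst
      have := Fintype.linearIndependent_iff.mp b.linearIndependent ![s, t] (by
        simpa [Fin.sum_univ_two] using hst)
      exact ⟨this 0, this 1⟩
    set x := b 0 with hx
    set y := b 1 with hy
    have np1 : ¬ ∃ u : K, y = u • x ∨ x = u • y := by
      rintro ⟨u, hu | hu⟩
      · exact one_ne_zero (hkey (-u) 1 (by linear_combination (norm := module) hu)).2
      · exact one_ne_zero (hkey 1 (-u) (by linear_combination (norm := module) hu)).1
    have np2 : ¬ ∃ u : K, (x + y) = u • x ∨ x = u • (x + y) := by
      rintro ⟨u, hu | hu⟩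
      · exact one_ne_zero (neg_eq_zero.mp
          (hkey (u - 1) (-1) (by linear_combination (norm := module) -hu)).2)
      · obtain ⟨ha, hb⟩ := hkey (u - 1) u (by linear_combination (norm := module) -hu)
        rw [hb] at ha; simp at ha
    have np3 : ¬ ∃ u : K, (x - y) = u • x ∨ x = u • (x - y) := by
      rintro ⟨u, hu | hu⟩
      · exact one_ne_zero (hkey (u - 1) 1 (by linear_combination (norm := module) -hu)).2
      · obtain ⟨ha, hb⟩ := hkey (u - 1) (-u) (by linear_combination (norm := module) -hu)
        rw [neg_eq_zero.mp hb] at ha; simp at ha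
    have np4 : ¬ ∃ u : K, (x + y) = u • y ∨ y = u • (x + y) := by
      rintro ⟨u, hu | hu⟩
      · exact one_ne_zero (hkey 1 (1 - u) (by linear_combination (norm := module) hu)).1
      · obtain ⟨ha, hb⟩ := hkey u (u - 1) (by linear_combination (norm := module) -hu)
        rw [ha] at hb; simp at hb
    have np5 : ¬ ∃ u : K, (x - y) = u • y ∨ y = u • (x - y) := by
      rintro ⟨u, hu | hu⟩
      · exact one_ne_zero (hkey 1 (-1 - u) (by linear_combination (norm := module) hu)).1
      · obtain ⟨ha, hb⟩ := hkey u (-u - 1) (by linear_combination (norm := module) -hu)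
        rw [ha] at hb; simp at hb
    have np6 : ¬ ∃ u : K, (x - y) = u • (x + y) ∨ (x + y) = u • (x - y) := by
      rintro ⟨u, hu | hu⟩
      · obtain ⟨ha, hb⟩ := hkey (u - 1) (u + 1) (by linear_combination (norm := module) -hu)
        exact h2K (by linear_combination hb - ha)
      · obtain ⟨ha, hb⟩ := hkey (u - 1) (-u - 1) (by linear_combination (norm := module) -hu)
        exact h2K (by linear_combination (-1 : K) * hb - ha)
    have heq := h x y (x + y) (x - y) np1 np2 np3 np4 np5 np6
    simp only [map_add, map_sub] at heq
    rw [hQ y x] at heq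
    have hdet : Q x x * Q y y = Q x y * Q x y :=
      mul_left_cancel₀ h2K (by ring_nf; linear_combination -heq)
    by_cases hc : Q x y = 0 ∧ Q y y = 0
    · refine ⟨y, b.ne_zero 1, fun w => ?_⟩
      have hz : Q y = 0 := by
        apply b.ext
        intro i
        fin_cases i
        · show Q y x = (0 : E →ₗ[K] K) x
          rw [hQ y x, hc.1]; rfl
        · show Q y y = (0 : E →ₗ[K] K) y
          rw [hc.2]; rfl
      rw [hz]; rfl
    · refine ⟨Q y y • x - Q x y • y, fun h0 => hc ?_, fun w => ?_⟩
      · have := hkey (Q y y) (-(Q x y)) (by linear_combination (norm := module) h0)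
        exact ⟨neg_eq_zero.mp this.2, this.1⟩
      · have hz : Q (Q y y • x - Q x y • y) = 0 := by
          apply b.ext
          intro i
          fin_cases i
          · show Q (Q y y • x - Q x y • y) x = (0 : E →ₗ[K] K) x
            simp only [map_sub, map_smul, LinearMap.sub_apply, LinearMap.smul_apply,
              smul_eq_mul, LinearMap.zero_apply]
            rw [hQ y x]; linear_combination hdet
          · show Q (Q y y • x - Q x y • y) y = (0 : E →ₗ[K] K) y
            simp only [map_sub, map_smul, LinearMap.sub_apply, LinearMap.smul_apply,
              smul_eq_mul, LinearMap.zero_apply]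
            ring
        rw [hz]; rfl
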